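/- Let G be a group and N a normal subgroup containing the commutator subgroup [N,N]. The abelianization N/[N,N] is a right module over the group ring Z[G/N] via conjugation ([x]·g = [g^{-1} x g]), and the preimage in N of the torsion submodule of N/[N,N] (assuming Z[G/N] is an Ore domain) is a normal subgroup of G. -/

import Mathlib

open scoped Classical

section Aux

variable {G : Type} [Group G] (N : Subgroup G) [hN : N.Normal]

/-- Conjugation `n ↦ g⁻¹ n g` as a monoid hom `N →* N`. -/
def conjN (g : G) : N →* N where
  toFun n := ⟨g⁻¹ * ↑n * g, by simpa using hN.conj_mem ↑n n.2 g⁻¹⟩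
  map_one' := by ext; simp
  map_mul' a b := by ext; simp [mul_assoc]

@[simp] lemma conjN_coe (g : G) (n : N) : (conjN N g n : G) = g⁻¹ * ↑n * g := rfl

/-- Induced conjugation on the abelianization of `N`. -/
noncomputable def cAb (g : G) : Abelianization N →* Abelianization N :=
  Abelianization.map (conjN N g)

lemma cAb_one : cAb N (1 : G) = MonoidHom.id _ := by
  have h : conjN N (1 : G) = MonoidHom.id N := by
    ext n; simp
  rw [cAb, h, Abelianization.map_id]

lemma cAb_mul (g h : G) : cAb N (g * h) = (cAb N h).comp (cAb N g) := by
  apply Abelianization.hom_ext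
  ext n
  simp only [MonoidHom.comp_apply, cAb, Abelianization.map_of]
  congr 1
  ext
  simp [mul_assoc]

lemma cAb_mem {n : G} (hn : n ∈ N) : cAb N n = MonoidHom.id _ := by
  apply Abelianization.hom_ext
  ext m
  simp only [MonoidHom.comp_apply, cAb, Abelianization.map_of, MonoidHom.id_apply]
  have h : conjN N n m = (⟨n, hn⟩ : N)⁻¹ * m * ⟨n, hn⟩ := by ext; rfl
  rw [h, map_mul, map_mul, map_inv, mul_comm _ (Abelianization.of m), mul_assoc,
    inv_mul_cancel, mul_one]

/-- Conjugation as an additive endomorphism of the abelianization. -/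
noncomputable def cAbEnd (g : G) : AddMonoid.End (Additive (Abelianization N)) :=
  MonoidHom.toAdditive (cAb N g)

lemma cAbEnd_one : cAbEnd N (1 : G) = 1 := by
  unfold cAbEnd; rw [cAb_one]; rfl

lemma cAbEnd_mul (g h : G) : cAbEnd N (g * h) = cAbEnd N h * cAbEnd N g := by
  unfold cAbEnd; rw [cAb_mul]; rfl

lemma cAbEnd_mem {n : G} (hn : n ∈ N) : cAbEnd N n = 1 := by
  unfold cAbEnd; rw [cAb_mem N hn]; rfl

/-- The conjugation "anti-action" of `G` packaged as a monoid hom into the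
opposite of the endomorphism ring of `N/[N,N]` (written additively). -/
noncomputable def condF : G →* (AddMonoid.End (Additive (Abelianization N)))ᵐᵒᵖ where
  toFun g := MulOpposite.op (cAbEnd N g)
  map_one' := by show MulOpposite.op (cAbEnd N (1 : G)) = 1; rw [cAbEnd_one]; rfl
  map_mul' g h := by show MulOpposite.op (cAbEnd N (g * h)) = _; rw [cAbEnd_mul]; rfl

/-- `condF` descends to `G ⧸ N`. -/
noncomputable def condRho : G ⧸ N →* (AddMonoid.End (Additive (Abelianization N)))ᵐᵒᵖ :=
  QuotientGroup.lift N (condF N) (fun n hn => by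
    show MulOpposite.op (cAbEnd N n) = 1
    rw [cAbEnd_mem N hn]; rfl)

/-- The induced ring morphism from the group ring. -/
noncomputable def condPsi :
    MonoidAlgebra ℤ (G ⧸ N) →ₐ[ℤ] (AddMonoid.End (Additive (Abelianization N)))ᵐᵒᵖ :=
  MonoidAlgebra.lift ℤ _ (G ⧸ N) (condRho N)

/-- The right action of the group ring on `N/[N,N]`. -/
noncomputable def condAct (a : Additive (Abelianization N)) (γ : MonoidAlgebra ℤ (G ⧸ N)) :
    Additive (Abelianization N) :=
  (condPsi N γ).unop a

lemma condAct_mul (a : Additive (Abelianization N)) (γ δ : MonoidAlgebra ℤ (G ⧸ N)) :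
    condAct N a (γ * δ) = condAct N (condAct N a γ) δ := by
  simp only [condAct, map_mul, MulOpposite.unop_mul]
  rfl

lemma condAct_zero (γ : MonoidAlgebra ℤ (G ⧸ N)) : condAct N 0 γ = 0 := by
  simp [condAct]

lemma condAct_add (a b : Additive (Abelianization N)) (γ : MonoidAlgebra ℤ (G ⧸ N)) :
    condAct N (a + b) γ = condAct N a γ + condAct N b γ := by
  simp [condAct]

lemma condAct_neg (a : Additive (Abelianization N)) (γ : MonoidAlgebra ℤ (G ⧸ N)) :
    condAct N (-a) γ = -condAct N a γ := by
  simp [condAct]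

lemma condAct_zero_left (a : Additive (Abelianization N)) : condAct N a 0 = 0 := by
  simp [condAct]

lemma condAct_add_left (a : Additive (Abelianization N)) (γ δ : MonoidAlgebra ℤ (G ⧸ N)) :
    condAct N a (γ + δ) = condAct N a γ + condAct N a δ := by
  simp only [condAct, map_add, MulOpposite.unop_add]
  rfl

lemma condAct_single (a : Additive (Abelianization N)) (g : G) (k : ℤ) :
    condAct N a (MonoidAlgebra.single ((g : G ⧸ N)) k)
      = k • cAbEnd N g a := by
  rw [condAct, condPsi, MonoidAlgebra.lift_single]
  rfl

/-- The class of an element of `N` in the additivized abelianization. -/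
noncomputable def clsN (x : G) (hx : x ∈ N) : Additive (Abelianization N) :=
  Additive.ofMul (Abelianization.of ⟨x, hx⟩)

lemma clsN_one : clsN N 1 N.one_mem = 0 := by
  have : (⟨(1 : G), N.one_mem⟩ : N) = 1 := rfl
  rw [clsN, this, map_one, ofMul_one]

lemma clsN_mul (a b : G) (ha : a ∈ N) (hb : b ∈ N) :
    clsN N (a * b) (N.mul_mem ha hb) = clsN N a ha + clsN N b hb := by
  have : (⟨a * b, N.mul_mem ha hb⟩ : N) = ⟨a, ha⟩ * ⟨b, hb⟩ := rfl
  rw [clsN, this, map_mul, ofMul_mul]; rfl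

lemma clsN_inv (a : G) (ha : a ∈ N) :
    clsN N a⁻¹ (N.inv_mem ha) = -(clsN N a ha) := by
  have : (⟨a⁻¹, N.inv_mem ha⟩ : N) = (⟨a, ha⟩ : N)⁻¹ := rfl
  rw [clsN, this, map_inv, ofMul_inv]
  rfl

/-- Product of conjugates, as an element of `N`. -/
noncomputable def prodConj (x : G) (hx : x ∈ N) (l : List (ℤ × G)) : N :=
  (l.map fun p => conjN N p.2 ((⟨x, hx⟩ : N) ^ p.1)).prod

lemma prodConj_coe (x : G) (hx : x ∈ N) (l : List (ℤ × G)) :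
    ((prodConj N x hx l : N) : G) = (l.map fun p => p.2⁻¹ * x ^ p.1 * p.2).prod := by
  rw [prodConj, SubmonoidClass.coe_list_prod, List.map_map]
  congr 1

lemma prodConj_cons (x : G) (hx : x ∈ N) (p : ℤ × G) (l : List (ℤ × G)) :
    prodConj N x hx (p :: l)
      = conjN N p.2 ((⟨x, hx⟩ : N) ^ p.1) * prodConj N x hx l := by
  rw [prodConj, List.map_cons, List.prod_cons]
  rfl

lemma condAct_listSum (x : G) (hx : x ∈ N) (l : List (ℤ × G)) :
    condAct N (clsN N x hx)
      ((l.map fun p => MonoidAlgebra.single ((p.2 : G ⧸ N)) p.1).sum)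
    = Additive.ofMul (Abelianization.of (prodConj N x hx l)) := by
  induction l with
  | nil =>
    rw [List.map_nil, List.sum_nil, condAct_zero_left]
    rw [prodConj, List.map_nil, List.prod_nil, map_one, ofMul_one]
  | cons p l ih =>
    rw [List.map_cons, List.sum_cons, condAct_add_left, ih, condAct_single]
    rw [prodConj_cons, map_mul, ofMul_mul]
    congr 1
    rw [map_zpow, map_zpow, ofMul_zpow]
    rfl

end Aux

/-- Let `G` be a group and `N` a normal subgroup containing `[N,N]`.
The abelianization `N/[N,N]` is a right `ℤ[G/N]`-module via conjugation, and —
assuming `ℤ[G/N]` is a (right Ore) domain — the preimage in `N` of its torsion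
submodule is a normal subgroup of `G`.  The torsion condition on `x ∈ N` is spelled
out concretely: there is a formal sum `∑ kᵢ·ηᵢ` (a list `l` of pairs `(kᵢ, ηᵢ)`)
whose image in `ℤ[G/N]` is nonzero, with `∏ ηᵢ⁻¹ x^{kᵢ} ηᵢ ∈ [N,N]`. -/
theorem preimage_of_torsion_submodule_normal
    (G : Type) [Group G] (N : Subgroup G) [N.Normal] (hNN : ⁅N, N⁆ ≤ N)
    (hdom : ∀ γ δ : MonoidAlgebra ℤ (G ⧸ N), γ * δ = 0 → γ = 0 ∨ δ = 0)
    (hore : ∀ γ δ : MonoidAlgebra ℤ (G ⧸ N), γ ≠ 0 → δ ≠ 0 →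
      ∃ x y : MonoidAlgebra ℤ (G ⧸ N), x ≠ 0 ∧ y ≠ 0 ∧ γ * x = δ * y) :
    ∃ H : Subgroup G, H.Normal ∧ ∀ x : G,
      x ∈ H ↔ x ∈ N ∧ ∃ l : List (ℤ × G),
        (l.map fun p => MonoidAlgebra.single ((p.2 : G ⧸ N)) p.1).sum ≠ 0 ∧
        (l.map fun p => p.2⁻¹ * x ^ p.1 * p.2).prod ∈ ⁅N, N⁆ := by
  classical
  have hcomm : ∀ n : N, (↑n ∈ ⁅N, N⁆) ↔ n ∈ commutator N := by
    intro n
    have hmap : Subgroup.map N.subtype (commutator N) = ⁅N, N⁆ := by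
      rw [commutator_def, Subgroup.map_commutator, ← MonoidHom.range_eq_map,
        Subgroup.range_subtype]
    constructor
    · intro h
      rw [← hmap] at h
      obtain ⟨m, hm, hmn⟩ := h
      have : m = n := Subtype.ext hmn
      rwa [← this]
    · intro h
      rw [← hmap]
      exact ⟨n, h, rfl⟩
  refine ⟨{
    carrier := {x | ∃ hx : x ∈ N, ∃ γ : MonoidAlgebra ℤ (G ⧸ N),
      γ ≠ 0 ∧ condAct N (clsN N x hx) γ = 0}
    one_mem' := by
      have hone : (1 : MonoidAlgebra ℤ (G ⧸ N)) ≠ 0 := by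
        have h1 : (MonoidAlgebra.single (1 : G ⧸ N) (1 : ℤ)) ≠ 0 := fun h =>
          one_ne_zero (MonoidAlgebra.single_eq_zero.1 h)
        simpa [MonoidAlgebra.one_def] using h1
      refine ⟨N.one_mem, 1, hone, ?_⟩
      rw [clsN_one, condAct_zero]
    mul_mem' := by
      rintro a b ⟨ha, γ, hγ, hγ0⟩ ⟨hb, δ, hδ, hδ0⟩
      obtain ⟨u, v, hu, hv, huv⟩ := hore γ δ hγ hδ
      refine ⟨N.mul_mem ha hb, γ * u, ?_, ?_⟩
      · intro h
        rcases hdom γ u h with h' | h' <;> [exact hγ h'; exact hu h']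
      · rw [clsN_mul N a b ha hb, condAct_add, condAct_mul, hγ0, condAct_zero, huv,
          condAct_mul, hδ0, condAct_zero, add_zero]
    inv_mem' := by
      rintro a ⟨ha, γ, hγ, hγ0⟩
      refine ⟨N.inv_mem ha, γ, hγ, ?_⟩
      rw [clsN_inv N a ha, condAct_neg, hγ0, neg_zero]
  }, ?_, ?_⟩
  · -- normality
    constructor
    rintro n ⟨hn, γ, hγ, hγ0⟩ g
    have hgng : g * n * g⁻¹ ∈ N := ‹N.Normal›.conj_mem n hn g
    refine ⟨hgng, MonoidAlgebra.single ((g : G ⧸ N)) 1 * γ, ?_, ?_⟩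
    · intro h
      rcases hdom _ _ h with h' | h'
      · exact absurd (MonoidAlgebra.single_eq_zero.1 h') (one_ne_zero (α := ℤ))
      · exact hγ h'
    · rw [condAct_mul, condAct_single]
      have h1 : cAbEnd N g (clsN N (g * n * g⁻¹) hgng)
          = clsN N n hn := by
        show Additive.ofMul (Abelianization.of (conjN N g ⟨g * n * g⁻¹, hgng⟩)) = _
        rw [clsN]
        congr 2
        ext
        simp [mul_assoc]
      rw [one_smul, h1, hγ0]
  · -- the membership characterization
    intro x
    constructor
    · rintro ⟨hx, γ, hγ, hγ0⟩
      have hσ : ((γ.coeff.support.toList.map fun q => (γ.coeff q, q.out)).map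
          fun p => MonoidAlgebra.single ((p.2 : G ⧸ N)) p.1).sum = γ := by
        rw [List.map_map]
        have h2 : ((fun p : ℤ × G => MonoidAlgebra.single ((p.2 : G ⧸ N)) p.1) ∘
            fun q : G ⧸ N => (γ.coeff q, q.out)) = fun q => MonoidAlgebra.single q (γ.coeff q) := by
          funext q
          simp [Function.comp, QuotientGroup.out_eq']
        rw [h2, Finset.sum_map_toList]
        exact MonoidAlgebra.sum_coeff_single γ
      refine ⟨hx, γ.coeff.support.toList.map fun q => (γ.coeff q, q.out), ?_, ?_⟩
      · rw [hσ]; exact hγ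
      · have h3 := condAct_listSum N x hx (γ.coeff.support.toList.map fun q => (γ.coeff q, q.out))
        rw [hσ, hγ0] at h3
        have hone : Abelianization.of (prodConj N x hx _) = 1 := h3.symm
        have hker : prodConj N x hx (γ.coeff.support.toList.map fun q => (γ.coeff q, q.out))
            ∈ commutator N := by
          rwa [← QuotientGroup.eq_one_iff]
        rw [← prodConj_coe N x hx]
        exact (hcomm _).2 hker
    · rintro ⟨hx, l, hσ, hπ⟩
      refine ⟨hx, (l.map fun p => MonoidAlgebra.single ((p.2 : G ⧸ N)) p.1).sum, hσ, ?_⟩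
      rw [condAct_listSum N x hx l]
      have h4 : prodConj N x hx l ∈ commutator N := by
        apply (hcomm _).1
        rw [prodConj_coe N x hx l]
        exact hπ
      have hone : Abelianization.of (prodConj N x hx l) = 1 :=
        (QuotientGroup.eq_one_iff _).2 h4
      rw [hone, ofMul_one]
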